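/- Let k ≥ 3. If u ∈ P_n for some n ∈ ℕ and v is a follower of u (i.e., v is obtained from u by one legal move of the game), then v ∉ P_m for every m ∈ ℕ. -/
import Mathlib


/-- `T n` is the `n`-th triangular number `n(n+1)/2`. -/
def T (n : ℕ) : ℕ := n * (n + 1) / 2

lemma two_T (n : ℕ) : 2 * T n = n * (n + 1) := by
  have h : 2 ∣ n * (n + 1) := (Nat.even_mul_succ_self n).two_dvd
  unfold T
  exact Nat.mul_div_cancel' h

lemma T_mono : Monotone T := by
  intro a b h
  have h1 := two_T a
  have h2 := two_T b
  have : a * (a + 1) ≤ b * (b + 1) := Nat.mul_le_mul h (by omega)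
  omega

lemma T_succ (n : ℕ) : T (n + 1) = T n + n + 1 := by
  have h1 := two_T n
  have h2 : 2 * T (n + 1) = n * (n + 1) + 2 * (n + 1) := by
    rw [two_T]; ring
  omega

/-- `Pset k n` is the set `Pₙ` of positions `(T n, m₁, …, m_{k-1})` (nondecreasing
`k`-tuples) whose first component is `T n` and whose remaining components sum to
`(k-1)·T n + n` (each of them is automatically `≥ T n` by monotonicity). -/
def Pset (k : ℕ) [NeZero k] (n : ℕ) : Set (Fin k → ℕ) :=
  {u | Monotone u ∧ u 0 = T n ∧
    ∑ i ∈ Finset.univ.erase 0, u i = (k - 1) * T n + n}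

/-- A raw move of the `k`-heap game (before re-sorting): either (i) remove a positive
number of tokens from at least one and at most `k-1` heaps, or (ii) remove the same
positive number `t` of tokens from all `k` heaps (`t` at most the smallest heap). -/
def MoveRaw (k : ℕ) (u w : Fin k → ℕ) : Prop :=
  ((∀ i, w i ≤ u i) ∧ u ≠ w ∧
    (Finset.univ.filter fun i => w i < u i).card ≤ k - 1)
  ∨ (∃ t > 0, ∀ i, u i = w i + t)

/-- `v` is a follower of `u`: `v` is obtained from `u` by one move, with
the components re-sorted into nondecreasing order. -/
def Follower (k : ℕ) (u v : Fin k → ℕ) : Prop :=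
  ∃ w : Fin k → ℕ, MoveRaw k u w ∧ Monotone v ∧ ∃ σ : Equiv.Perm (Fin k), v = w ∘ σ

/-- part (I) of the proof of Theorem 1: any follower of a position
in some `Pₙ` lies in `Pₘ` for no `m`. -/
theorem follower_of_P_not_P (k : ℕ) [NeZero k] (hk : 3 ≤ k) (n : ℕ)
    (u v : Fin k → ℕ) (hu : u ∈ Pset k n) (hv : Follower k u v) :
    ∀ m, v ∉ Pset k m := by
  intro m hm
  obtain ⟨humono, hu0, husum⟩ := hu
  obtain ⟨w, hmove, hvmono, σ, hveq⟩ := hv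
  obtain ⟨hvmono', hv0, hvsum⟩ := hm
  have hsum_u : ∑ i, u i = k * T n + n := by
    rw [← Finset.add_sum_erase _ u (Finset.mem_univ 0), hu0, husum, Nat.sub_one_mul]
    have hle : T n ≤ k * T n := Nat.le_mul_of_pos_left _ (by omega)
    omega
  have hsum_v : ∑ i, v i = k * T m + m := by
    rw [← Finset.add_sum_erase _ v (Finset.mem_univ 0), hv0, hvsum, Nat.sub_one_mul]
    have hle : T m ≤ k * T m := Nat.le_mul_of_pos_left _ (by omega)
    omega
  have hsum_vw : ∑ i, v i = ∑ i, w i := by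
    rw [hveq]
    exact Fintype.sum_equiv σ _ _ (fun i => rfl)
  have hvlb : ∀ i, T m ≤ v i := fun i => hv0 ▸ hvmono' (Fin.zero_le i)
  have hvub : ∀ j, v j ≤ T m + m := by
    intro j
    by_cases hj : j = 0
    · subst hj; rw [hv0]; omega
    · have hjm : j ∈ Finset.univ.erase 0 := Finset.mem_erase.2 ⟨hj, Finset.mem_univ j⟩
      have h1 : v j + ∑ i ∈ (Finset.univ.erase 0).erase j, v i = (k - 1) * T m + m := by
        rw [Finset.add_sum_erase _ v hjm, hvsum]
      have h2 : ((Finset.univ.erase 0).erase j).card • T m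
          ≤ ∑ i ∈ (Finset.univ.erase 0).erase j, v i :=
        Finset.card_nsmul_le_sum _ _ _ (fun i _ => hvlb i)
      have hcard : ((Finset.univ.erase 0).erase j).card = k - 2 := by
        rw [Finset.card_erase_of_mem hjm, Finset.card_erase_of_mem (Finset.mem_univ 0),
          Finset.card_univ, Fintype.card_fin]
        omega
      rw [hcard, smul_eq_mul] at h2
      have hk2 : (k - 1) * T m = (k - 2) * T m + T m := by
        have hke : k - 1 = (k - 2) + 1 := by omega
        rw [hke, add_mul, one_mul]
      omega
  rcases hmove with ⟨hwle, hne, hcard⟩ | ⟨t, ht, hti⟩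
  · -- case (i)
    obtain ⟨i, hi⟩ : ∃ i, w i ≠ u i := by
      by_contra hc; push_neg at hc; exact hne (funext fun i => (hc i).symm)
    have hlt : ∑ i, w i < ∑ i, u i :=
      Finset.sum_lt_sum (fun i _ => hwle i)
        ⟨i, Finset.mem_univ i, lt_of_le_of_ne (hwle i) hi⟩
    obtain ⟨i0, hi0⟩ : ∃ i, ¬ w i < u i := by
      by_contra hc; push_neg at hc
      have heq : (Finset.univ.filter fun i => w i < u i) = Finset.univ :=
        Finset.filter_true_of_mem (fun i _ => hc i)
      rw [heq, Finset.card_univ, Fintype.card_fin] at hcard; omega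
    have hwi0 : w i0 = u i0 := le_antisymm (hwle i0) (by omega)
    have hTn_le : T n ≤ T m + m := by
      have h1 : v (σ.symm i0) = w i0 := by rw [hveq]; simp
      have h2 : T n ≤ u i0 := hu0 ▸ humono (Fin.zero_le i0)
      have h3 := hvub (σ.symm i0)
      omega
    have hmn : m < n := by
      by_contra hc; push_neg at hc
      have hT : T n ≤ T m := T_mono hc
      have hk' : k * T n ≤ k * T m := Nat.mul_le_mul_left k hT
      have : k * T m + m < k * T n + n := by
        rw [← hsum_u, ← hsum_v, hsum_vw]; exact hlt
      omega
    have hT1 : T (m + 1) ≤ T n := T_mono (by omega)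
    have hs := T_succ m
    omega
  · -- case (ii)
    have hsum_w : ∑ i, u i = ∑ i, w i + k * t := by
      have he : ∑ i, u i = ∑ i, (w i + t) := Finset.sum_congr rfl (fun i _ => hti i)
      rw [he, Finset.sum_add_distrib, Finset.sum_const, Finset.card_univ,
        Fintype.card_fin, smul_eq_mul]
    have h1 : v 0 ≤ w 0 := by
      have hle := hvmono' (Fin.zero_le (σ.symm 0))
      have he : v (σ.symm 0) = w 0 := by rw [hveq]; simp
      omega
    have h2 : T n ≤ v 0 + t := by
      have he : v 0 = w (σ 0) := by rw [hveq]; rfl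
      have h3 := hti (σ 0)
      have h4 : u 0 ≤ u (σ 0) := humono (Fin.zero_le _)
      omega
    have hTnm : T n = T m + t := by
      have h5 := hti 0
      rw [hu0] at h5
      rw [hv0] at h1 h2
      omega
    have hkT : k * T n = k * T m + k * t := by rw [hTnm, Nat.mul_add]
    have hfin : k * T n + n = k * T m + m + k * t := by
      rw [← hsum_u, ← hsum_v, hsum_vw, hsum_w]
    have hnm : n = m := by linarith
    subst hnm
    omega
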